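/- Let T ⊂ ℝⁿ be a simplex (the convex hull of n+1 affinely independent points) with barycenter x̄, and let r₁, r₂ > 0 satisfy B(x̄,r₁) ⊂ T ⊂ B(x̄,r₂). For every C² map u : T → ℝⁿ, the affine interpolation ū of u at the vertices of T satisfies Lip(u - ū) ≤ (4 r₂²/r₁) · sup over T of the operator norm of the Hessian of u. -/

import Mathlib

open Metric

theorem stmt2 (n : ℕ) (x : Fin (n+1) → EuclideanSpace ℝ (Fin n))
    (hx : AffineIndependent ℝ x)
    (T : Set (EuclideanSpace ℝ (Fin n))) (hT : T = convexHull ℝ (Set.range x))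
    (xbar : EuclideanSpace ℝ (Fin n)) (hxbar : xbar = ((n : ℝ) + 1)⁻¹ • ∑ i, x i)
    (r₁ r₂ : ℝ) (hr₁ : 0 < r₁) (hr₂ : 0 < r₂)
    (hball₁ : ball xbar r₁ ⊆ T) (hball₂ : T ⊆ ball xbar r₂)
    (u : EuclideanSpace ℝ (Fin n) → EuclideanSpace ℝ (Fin n))
    (hu : ContDiffOn ℝ 2 u T)
    (H : ℝ) (hH : ∀ p ∈ T, ‖iteratedFDerivWithin ℝ 2 u T p‖ ≤ H)
    (A : EuclideanSpace ℝ (Fin n) →L[ℝ] EuclideanSpace ℝ (Fin n))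
    (b : EuclideanSpace ℝ (Fin n))
    (hinterp : ∀ i, A (x i) + b = u (x i)) :
    ∀ p ∈ T, ∀ q ∈ T,
      ‖(u p - (A p + b)) - (u q - (A q + b))‖ ≤ (4 * r₂ ^ 2 / r₁) * H * ‖p - q‖ := by
  have hTconv : Convex ℝ T := hT ▸ convex_convexHull ℝ _
  have hTclosed : IsClosed T := hT ▸ ((Set.finite_range x).isCompact_convexHull (𝕜 := ℝ)).isClosed
  have hcb : closedBall xbar r₁ ⊆ T := by
    rw [← closure_ball xbar hr₁.ne']
    exact hTclosed.closure_subset_iff.mpr hball₁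
  have hxbarT : xbar ∈ T := hcb (mem_closedBall_self hr₁.le)
  have hH0 : (0:ℝ) ≤ H := le_trans (norm_nonneg _) (hH xbar hxbarT)
  have hud : UniqueDiffOn ℝ T :=
    uniqueDiffOn_convex hTconv
      ⟨xbar, mem_interior.mpr ⟨ball xbar r₁, hball₁, isOpen_ball, mem_ball_self hr₁⟩⟩
  have hdiam : ∀ y ∈ T, ∀ z ∈ T, ‖y - z‖ ≤ 2 * r₂ := by
    intro y hy z hz
    have h1 : dist y xbar < r₂ := mem_ball.1 (hball₂ hy)
    have h2 : dist z xbar < r₂ := mem_ball.1 (hball₂ hz)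
    calc ‖y - z‖ = dist y z := (dist_eq_norm y z).symm
      _ ≤ dist y xbar + dist xbar z := dist_triangle y xbar z
      _ = dist y xbar + dist z xbar := by rw [dist_comm xbar z]
      _ ≤ 2 * r₂ := by linarith
  set F := fderivWithin ℝ u T with hFdef
  set G := iteratedFDerivWithin ℝ 1 u T with hGdef
  have hGdiff : DifferentiableOn ℝ G T :=
    hu.differentiableOn_iteratedFDerivWithin (by norm_num) hud
  have hGlip : ∀ p ∈ T, ∀ q ∈ T, ‖G p - G q‖ ≤ H * ‖p - q‖ := by
    intro p hp q hq
    refine hTconv.norm_image_sub_le_of_norm_fderivWithin_le hGdiff ?_ hq hp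
    intro z hz
    rw [hGdef, norm_fderivWithin_iteratedFDerivWithin]
    exact hH z hz
  have hFG : ∀ p ∈ T,
      continuousMultilinearCurryFin1 ℝ (EuclideanSpace ℝ (Fin n)) (EuclideanSpace ℝ (Fin n)) (G p)
        = F p := by
    intro p hp
    ext v
    simp [hGdef, iteratedFDerivWithin_one_apply (hud p hp), Fin.snoc]
    rfl
  have hFlip : ∀ p ∈ T, ∀ q ∈ T, ‖F p - F q‖ ≤ H * ‖p - q‖ := by
    intro p hp q hq
    have : F p - F q
        = continuousMultilinearCurryFin1 ℝ (EuclideanSpace ℝ (Fin n))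
            (EuclideanSpace ℝ (Fin n)) (G p - G q) := by
      rw [map_sub, hFG p hp, hFG q hq]
    rw [this, LinearIsometryEquiv.norm_map]
    exact hGlip p hp q hq
  have hudiff : DifferentiableOn ℝ u T := hu.differentiableOn two_ne_zero
  -- main derivative bound
  have key : ∀ p ∈ T, ‖F p - A‖ ≤ 4 * H * r₂ ^ 2 / r₁ := by
    intro p hp
    set M : ℝ := 4 * H * r₂ ^ 2 with hMdef
    have hM0 : 0 ≤ M := by
      have : (0:ℝ) ≤ 4 * H := by linarith
      exact mul_nonneg this (sq_nonneg r₂)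
    have hTaylor : ∀ y ∈ T, ‖u y - u p - (F p) (y - p)‖ ≤ (H * (2 * r₂)) * ‖y - p‖ := by
      intro y hy
      refine hTconv.norm_image_sub_le_of_norm_fderivWithin_le' hudiff ?_ hp hy
      intro z hz
      calc ‖F z - F p‖ ≤ H * ‖z - p‖ := hFlip z hz p hp
        _ ≤ H * (2 * r₂) := by
            exact mul_le_mul_of_nonneg_left (hdiam z hz p hp) hH0
    set L : EuclideanSpace ℝ (Fin n) →L[ℝ] EuclideanSpace ℝ (Fin n) := F p - A with hLdef
    set c : EuclideanSpace ℝ (Fin n) := u p - (F p) p - b with hcdef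
    have hGform : ∀ y, u p + (F p) (y - p) - (A y + b) = L y + c := by
      intro y
      simp only [hLdef, hcdef, ContinuousLinearMap.sub_apply, map_sub]
      abel
    set S : Set (EuclideanSpace ℝ (Fin n)) := {y | ‖L y + c‖ ≤ M} with hSdef
    have hSconv : Convex ℝ S := by
      intro y hy z hz a a' ha ha' haa
      show ‖L (a • y + a' • z) + c‖ ≤ M
      obtain rfl : a' = 1 - a := by linarith
      have : L (a • y + (1 - a) • z) + c = a • (L y + c) + (1 - a) • (L z + c) := by
        rw [map_add, map_smul, map_smul]
        module
      rw [this]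
      calc ‖a • (L y + c) + (1 - a) • (L z + c)‖
          ≤ ‖a • (L y + c)‖ + ‖(1 - a) • (L z + c)‖ := norm_add_le _ _
        _ = a * ‖L y + c‖ + (1 - a) * ‖L z + c‖ := by
            rw [norm_smul, norm_smul, Real.norm_of_nonneg ha, Real.norm_of_nonneg ha']
        _ ≤ a * M + (1 - a) * M := by
            exact add_le_add (mul_le_mul_of_nonneg_left hy ha)
              (mul_le_mul_of_nonneg_left hz ha')
        _ = M := by ring
    have hvert : Set.range x ⊆ S := by
      rintro _ ⟨i, rfl⟩
      have hxiT : x i ∈ T := hT ▸ subset_convexHull ℝ _ (Set.mem_range_self i)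
      show ‖L (x i) + c‖ ≤ M
      rw [← hGform (x i), hinterp i]
      have : u p + (F p) (x i - p) - u (x i) = -(u (x i) - u p - (F p) (x i - p)) := by abel
      rw [this, norm_neg]
      calc ‖u (x i) - u p - (F p) (x i - p)‖ ≤ (H * (2 * r₂)) * ‖x i - p‖ :=
            hTaylor (x i) hxiT
        _ ≤ (H * (2 * r₂)) * (2 * r₂) := by
            refine mul_le_mul_of_nonneg_left (hdiam (x i) hxiT p hp)
              (mul_nonneg hH0 (by linarith))
        _ = M := by ring
    have hTS : T ⊆ S := hT ▸ convexHull_min hvert hSconv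
    have hLe : ∀ e : EuclideanSpace ℝ (Fin n), ‖e‖ = r₁ → ‖L e‖ ≤ M := by
      intro e he
      have h1 : xbar + e ∈ S := hTS (hcb (by
        rw [mem_closedBall, dist_eq_norm, add_sub_cancel_left, he]))
      have h2 : xbar - e ∈ S := hTS (hcb (by
        rw [mem_closedBall, dist_eq_norm]
        have : xbar - e - xbar = -e := by abel
        rw [this, norm_neg, he]))
      have h1' : ‖L (xbar + e) + c‖ ≤ M := h1
      have h2' : ‖L (xbar - e) + c‖ ≤ M := h2
      have heq : L e + L e = (L (xbar + e) + c) - (L (xbar - e) + c) := by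
        rw [map_add, map_sub]; abel
      have : ‖L e + L e‖ ≤ 2 * M := by
        rw [heq]
        calc ‖(L (xbar + e) + c) - (L (xbar - e) + c)‖
            ≤ ‖L (xbar + e) + c‖ + ‖L (xbar - e) + c‖ := norm_sub_le _ _
          _ ≤ 2 * M := by linarith
      have h2e : ‖L e + L e‖ = 2 * ‖L e‖ := by
        have h : L e + L e = (2:ℝ) • L e := (two_smul ℝ (L e)).symm
        rw [h, norm_smul]
        simp
      rw [h2e] at this
      linarith
    refine ContinuousLinearMap.opNorm_le_bound L
      (by rw [hMdef] at hM0 ⊢; exact div_nonneg hM0 hr₁.le) ?_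
    intro v
    rcases eq_or_ne v 0 with rfl | hv
    · simp
    · have hvn : (0:ℝ) < ‖v‖ := norm_pos_iff.mpr hv
      have he : ‖(r₁ / ‖v‖) • v‖ = r₁ := by
        rw [norm_smul, Real.norm_of_nonneg (div_nonneg hr₁.le (norm_nonneg v))]
        field_simp
      have hLe' : ‖L ((r₁ / ‖v‖) • v)‖ ≤ M := hLe _ he
      rw [map_smul, norm_smul,
        Real.norm_of_nonneg (div_nonneg hr₁.le (norm_nonneg v))] at hLe'
      have h3 : ‖L v‖ = (‖v‖ / r₁) * (r₁ / ‖v‖ * ‖L v‖) := by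
        field_simp
      calc ‖L v‖ = (‖v‖ / r₁) * (r₁ / ‖v‖ * ‖L v‖) := h3
        _ ≤ (‖v‖ / r₁) * M :=
            mul_le_mul_of_nonneg_left hLe' (div_nonneg (norm_nonneg v) hr₁.le)
        _ = M / r₁ * ‖v‖ := by ring
  -- final mean value inequality
  intro p hp q hq
  have hwdiff : DifferentiableOn ℝ (fun y => u y - (A y + b)) T :=
    hudiff.sub ((A.differentiable.differentiableOn).add_const b)
  have hwbound : ∀ z ∈ T,
      ‖fderivWithin ℝ (fun y => u y - (A y + b)) T z‖ ≤ 4 * H * r₂ ^ 2 / r₁ := by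
    intro z hz
    have hd : HasFDerivWithinAt (fun y => u y - (A y + b)) (F z - A) T z :=
      ((hudiff z hz).hasFDerivWithinAt).sub
        ((A.hasFDerivAt.add_const b).hasFDerivWithinAt)
    rw [hd.fderivWithin (hud z hz)]
    exact key z hz
  have := hTconv.norm_image_sub_le_of_norm_fderivWithin_le hwdiff hwbound hq hp
  calc ‖(u p - (A p + b)) - (u q - (A q + b))‖ ≤ 4 * H * r₂ ^ 2 / r₁ * ‖p - q‖ := this
    _ = (4 * r₂ ^ 2 / r₁) * H * ‖p - q‖ := by ring
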